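/- arXiv:2401.06618 — 4 statements merged into one kernel-verified Lean document; each statement's English description precedes it below -/
import Mathlib

section
/- Let {e₁,…,e_h} be a trace-orthogonal basis of 𝔽_{2^h} over 𝔽₂ and let φ : 𝔽_{2^h}^{2n} → 𝔽₂^{2hn} be the coordinate map that replaces each entry Σⱼ x_j e_j by the tuple (x₁,…,x_h). Then φ preserves the trace-symplectic inner product: ⟨φ(a|b), φ(a'|b')⟩_s = ⟨(a|b),(a'|b')⟩_s for all (a|b), (a'|b') ∈ 𝔽_{2^h}^{2n}. -/
/-- The absolute trace map `𝔽_{2^h} → 𝔽₂`. -/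
noncomputable def trF (h : ℕ) (x : GaloisField 2 h) : ZMod 2 :=
  Algebra.trace (ZMod 2) (GaloisField 2 h) x

lemma trF_mul_repr (h : ℕ) (e : Module.Basis (Fin h) (ZMod 2) (GaloisField 2 h))
    (he : ∀ i j, trF h (e i * e j) = if i = j then 1 else 0)
    (x y : GaloisField 2 h) :
    trF h (x * y) = ∑ j, e.repr x j * e.repr y j := by
  conv_lhs => rw [← e.sum_repr x, ← e.sum_repr y]
  rw [Finset.sum_mul_sum]
  simp only [trF] at he ⊢
  simp only [smul_mul_smul_comm, map_sum, map_smul, smul_eq_mul, he, mul_ite, mul_one, mul_zero]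
  simp [Finset.sum_ite_eq']

/-- The coordinate map `φ` induced by a trace-orthogonal basis preserves the
trace-symplectic inner product: for `(a|b), (a'|b') ∈ 𝔽_{2^h}^{2n}` the
trace-symplectic inner product equals the binary symplectic inner product of
the coordinate vectors. -/
theorem stmt_5 (h n : ℕ) (hh : 1 ≤ h)
    (e : Module.Basis (Fin h) (ZMod 2) (GaloisField 2 h))
    (he : ∀ i j, trF h (e i * e j) = if i = j then 1 else 0)
    (a b a' b' : Fin n → GaloisField 2 h) :
    ∑ i, trF h (a i * b' i + a' i * b i) =
      ∑ i, ∑ j, (e.repr (a i) j * e.repr (b' i) j + e.repr (a' i) j * e.repr (b i) j) := by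
  refine Finset.sum_congr rfl (fun i _ => ?_)
  have hadd : trF h (a i * b' i + a' i * b i) = trF h (a i * b' i) + trF h (a' i * b i) := by
    unfold trF; exact map_add _ _ _
  rw [hadd, trF_mul_repr h e he, trF_mul_repr h e he, ← Finset.sum_add_distrib]
end

section
/- Let {e₁,…,e_h} be a trace-orthogonal basis of 𝔽_{2^h} over 𝔽₂ and φ : 𝔽_{2^h}^{2n} → 𝔽₂^{2hn} the induced coordinate map. Then φ induces a bijection between additive codes C ⊆ 𝔽_{2^h}^{2n} with C ⊆ C^{⊥s} (symplectic self-orthogonal with respect to the trace-symplectic form) of size 2^{h(n-k)}, and additive codes C' ⊆ 𝔽₂^{2hn} with C' ⊆ C'^{⊥s} of size 2^{h(n-k)}. -/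
noncomputable instance (h : ℕ) : Fintype (GaloisField 2 h) := Fintype.ofFinite _

/-- The trace-symplectic inner product on `𝔽_{2^h}^{2n}` (a pair `(a|b)`). -/
noncomputable def trSymp (h n : ℕ)
    (v w : (Fin n → GaloisField 2 h) × (Fin n → GaloisField 2 h)) : ZMod 2 :=
  ∑ i, trF h (v.1 i * w.2 i + w.1 i * v.2 i)

/-- The binary symplectic inner product on `𝔽₂^{2hn}`, with coordinates grouped as
`n` blocks of `h`. -/
def binSymp (h n : ℕ)
    (v w : (Fin n → Fin h → ZMod 2) × (Fin n → Fin h → ZMod 2)) : ZMod 2 :=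
  ∑ i, ∑ j, (v.1 i j * w.2 i j + w.1 i j * v.2 i j)

/-- The coordinate map `φ : 𝔽_{2^h}^{2n} → 𝔽₂^{2hn}` induced by a basis
`{e₁,…,e_h}` of `𝔽_{2^h}` over `𝔽₂`. -/
noncomputable def phi (h n : ℕ) (e : Module.Basis (Fin h) (ZMod 2) (GaloisField 2 h)) :
    ((Fin n → GaloisField 2 h) × (Fin n → GaloisField 2 h)) ≃ₗ[ZMod 2]
      ((Fin n → Fin h → ZMod 2) × (Fin n → Fin h → ZMod 2)) :=
  LinearEquiv.prodCongr
    (LinearEquiv.piCongrRight fun _ => e.equivFun)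
    (LinearEquiv.piCongrRight fun _ => e.equivFun)

lemma tr_mul (h : ℕ) (e : Module.Basis (Fin h) (ZMod 2) (GaloisField 2 h))
    (he : ∀ i j, trF h (e i * e j) = if i = j then 1 else 0)
    (x y : GaloisField 2 h) :
    trF h (x * y) = ∑ j, e.equivFun x j * e.equivFun y j := by
  conv_lhs => rw [← e.sum_equivFun x, ← e.sum_equivFun y]
  rw [Finset.sum_mul_sum]
  unfold trF
  rw [map_sum]
  rw [Finset.sum_congr rfl (fun i _ => map_sum _ _ _)]
  simp only [smul_mul_smul_comm, map_smul, smul_eq_mul]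
  have : ∀ i j : Fin h, (Algebra.trace (ZMod 2) (GaloisField 2 h)) (e i * e j)
      = if i = j then 1 else 0 := he
  simp only [this]
  rw [Finset.sum_comm]
  simp [Finset.mul_sum, mul_ite]

lemma symp_eq (h n : ℕ) (e : Module.Basis (Fin h) (ZMod 2) (GaloisField 2 h))
    (he : ∀ i j, trF h (e i * e j) = if i = j then 1 else 0)
    (v w : (Fin n → GaloisField 2 h) × (Fin n → GaloisField 2 h)) :
    binSymp h n (phi h n e v) (phi h n e w) = trSymp h n v w := by
  unfold binSymp trSymp phi
  simp only [LinearEquiv.prodCongr_apply, LinearEquiv.piCongrRight_apply]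
  refine Finset.sum_congr rfl fun i _ => ?_
  have : trF h (v.1 i * w.2 i + w.1 i * v.2 i)
      = trF h (v.1 i * w.2 i) + trF h (w.1 i * v.2 i) := by
    unfold trF; rw [map_add]
  rw [this, tr_mul h e he, tr_mul h e he, ← Finset.sum_add_distrib]

/-- `φ` induces a bijection between trace-symplectic self-orthogonal additive codes
`C ⊆ 𝔽_{2^h}^{2n}` of size `2^{h(n-k)}` and binary symplectic self-orthogonal
additive codes `C' ⊆ 𝔽₂^{2hn}` of size `2^{h(n-k)}`. -/
theorem stmt_6 (h n k : ℕ) (hh : 1 ≤ h) (hk : k ≤ n)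
    (e : Module.Basis (Fin h) (ZMod 2) (GaloisField 2 h))
    (he : ∀ i j, trF h (e i * e j) = if i = j then 1 else 0) :
    Set.BijOn
      (fun C : Submodule (ZMod 2) ((Fin n → GaloisField 2 h) × (Fin n → GaloisField 2 h)) =>
        Submodule.map (phi h n e).toLinearMap C)
      {C | (∀ v ∈ C, ∀ w ∈ C, trSymp h n v w = 0) ∧ Nat.card C = 2 ^ (h * (n - k))}
      {C' | (∀ v ∈ C', ∀ w ∈ C', binSymp h n v w = 0) ∧ Nat.card C' = 2 ^ (h * (n - k))} := by
  set φ := phi h n e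
  have hcard : ∀ C : Submodule (ZMod 2)
      ((Fin n → GaloisField 2 h) × (Fin n → GaloisField 2 h)),
      Nat.card (Submodule.map φ.toLinearMap C) = Nat.card C := by
    intro C
    exact (Nat.card_congr (φ.submoduleMap C).toEquiv).symm
  refine ⟨?_, ?_, ?_⟩
  · rintro C ⟨h1, h2⟩
    refine ⟨?_, by rw [hcard]; exact h2⟩
    rintro v ⟨a, ha, rfl⟩ w ⟨b, hb, rfl⟩
    exact (symp_eq h n e he a b).trans (h1 a ha b hb)
  · intro C1 _ C2 _ hmap
    exact Submodule.map_injective_of_injective φ.injective hmap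
  · rintro C' ⟨h1, h2⟩
    refine ⟨Submodule.map φ.symm.toLinearMap C', ⟨?_, ?_⟩, ?_⟩
    · rintro v ⟨a, ha, rfl⟩ w ⟨b, hb, rfl⟩
      rw [← symp_eq h n e he]
      have ea : φ (φ.symm a) = a := φ.apply_symm_apply a
      have eb : φ (φ.symm b) = b := φ.apply_symm_apply b
      rw [show φ.symm.toLinearMap a = φ.symm a from rfl,
        show φ.symm.toLinearMap b = φ.symm b from rfl, ea, eb]
      exact h1 a ha b hb
    · rw [(Nat.card_congr (φ.symm.submoduleMap C').toEquiv).symm]; exact h2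
    · simp only [← Submodule.map_comp]
      rw [show φ.toLinearMap.comp φ.symm.toLinearMap = LinearMap.id from by
        ext x <;> simp]
      exact Submodule.map_id C'
end

section
/- Let ℓ₁,…,ℓ_h be h projective lines in PG(2h-1,2) that together span PG(2h-1,2). Then there is a unique symplectic polarity ⊥ on PG(2h-1,2) such that ℓ_i^⊥ = ⟨ℓ_j : j ≠ i⟩ for all i = 1,…,h. -/
abbrev F2 := ZMod 2

/-- The perpendicular subspace of `W` with respect to a bilinear form `f`. -/
def sperp {V : Type*} [AddCommGroup V] [Module F2 V]
    (f : V →ₗ[F2] V →ₗ[F2] F2) (W : Submodule F2 V) : Submodule F2 V where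
  carrier := {v | ∀ w ∈ W, f v w = 0}
  add_mem' := by
    intro a b ha hb w hw
    simp [map_add, LinearMap.add_apply, ha w hw, hb w hw]
  zero_mem' := by intro w hw; simp
  smul_mem' := by
    intro c v hv w hw
    simp [map_smul, LinearMap.smul_apply, hv w hw]

/-- A subspace is totally isotropic for `f` if `f` vanishes on it. -/
def TotIso {V : Type*} [AddCommGroup V] [Module F2 V]
    (f : V →ₗ[F2] V →ₗ[F2] F2) (W : Submodule F2 V) : Prop :=
  ∀ v ∈ W, ∀ w ∈ W, f v w = 0

/-- `f` is a nondegenerate alternating (symplectic) bilinear form. -/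
def IsSymplectic {V : Type*} [AddCommGroup V] [Module F2 V]
    (f : V →ₗ[F2] V →ₗ[F2] F2) : Prop :=
  (∀ v, f v v = 0) ∧ ∀ v, (∀ w, f v w = 0) → v = 0

lemma mem_sperp {V : Type*} [AddCommGroup V] [Module F2 V]
    (f : V →ₗ[F2] V →ₗ[F2] F2) (W : Submodule F2 V) (x : V) :
    x ∈ sperp f W ↔ ∀ w ∈ W, f x w = 0 := Iff.rfl

set_option maxHeartbeats 1000000 in
/-- Given `h` lines (2-dimensional subspaces) of `𝔽₂^{2h}` that together span the
whole space, there is a unique symplectic polarity (nondegenerate alternating form)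
such that `ℓᵢ^⊥ = ⟨ℓⱼ : j ≠ i⟩` for all `i`. -/
theorem stmt_7 (h : ℕ) (hh : 1 ≤ h)
    (ℓ : Fin h → Submodule F2 (Fin (2 * h) → F2))
    (hdim : ∀ i, Module.finrank F2 (ℓ i) = 2)
    (hspan : ⨆ i, ℓ i = ⊤) :
    ∃! f : (Fin (2 * h) → F2) →ₗ[F2] (Fin (2 * h) → F2) →ₗ[F2] F2,
      IsSymplectic f ∧ ∀ i, sperp f (ℓ i) = ⨆ j ∈ ({j | j ≠ i} : Set (Fin h)), ℓ j := by
  classical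
  -- small finite facts
  have e2 : ∀ k : Fin 2, ¬ (k = k + 1) := by decide
  have e3 : ∀ k l : Fin 2, k ≠ l → k = l + 1 := by decide
  have e4 : ∀ k : Fin 2, k + 1 + 1 = k := by decide
  have e6 : ∀ k l : Fin 2, k = l + 1 → l = k + 1 := by decide
  have efin2 : ∀ a b c : Fin 2, a ≠ b → c ≠ b → a = c := by decide
  have hF : ∀ a : F2, a = 0 ∨ a = 1 := by decide
  have hFadd : ∀ a b : F2, a + b = 0 → a = b := by decide
  have hF2 : ∀ a : F2, a + a = 0 := by decide
  have pext : ∀ a b : Fin h × Fin 2, a.1 = b.1 → a.2 = b.2 → a = b := fun a b h1 h2 =>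
    Prod.ext h1 h2
  -- bases of the lines
  let bi : ∀ i, Module.Basis (Fin 2) F2 (ℓ i) := fun i =>
    Module.finBasisOfFinrankEq F2 (ℓ i) (hdim i)
  let v : Fin h × Fin 2 → (Fin (2 * h) → F2) := fun p => ((bi p.1 p.2 : ℓ p.1) : Fin (2 * h) → F2)
  have hmem : ∀ p : Fin h × Fin 2, v p ∈ ℓ p.1 := fun p => (bi p.1 p.2).2
  have hsp : ∀ i, Submodule.span F2 (Set.range fun k => v (i, k)) = ℓ i := by
    intro i
    have h1 : Submodule.map (ℓ i).subtype (Submodule.span F2 (Set.range (bi i))) = ℓ i := by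
      rw [(bi i).span_eq, Submodule.map_top, Submodule.range_subtype]
    rw [Submodule.map_span, ← Set.range_comp] at h1
    exact h1
  have hvs : Submodule.span F2 (Set.range v) = ⊤ := by
    have hr : Set.range v = ⋃ i, Set.range fun k => v (i, k) := by
      ext x
      constructor
      · rintro ⟨⟨i, k⟩, rfl⟩; exact Set.mem_iUnion.2 ⟨i, ⟨k, rfl⟩⟩
      · intro hx
        rcases Set.mem_iUnion.1 hx with ⟨i, k, rfl⟩
        exact ⟨(i, k), rfl⟩
    rw [hr, Submodule.span_iUnion]
    simp_rw [hsp]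
    exact hspan
  have hcard : Fintype.card (Fin h × Fin 2) = Module.finrank F2 (Fin (2 * h) → F2) := by
    simp [Module.finrank_pi]
    omega
  let B : Module.Basis (Fin h × Fin 2) F2 (Fin (2 * h) → F2) :=
    basisOfTopLeSpanOfCardEqFinrank v hvs.ge hcard
  have hB : ∀ p, B p = v p := fun p =>
    congrFun (coe_basisOfTopLeSpanOfCardEqFinrank v hvs.ge hcard) p
  have hBmem : ∀ p, B p ∈ ℓ p.1 := fun p => by rw [hB]; exact hmem p
  -- the matrix of the form
  let M : Fin h × Fin 2 → Fin h × Fin 2 → F2 := fun p q =>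
    if p.1 = q.1 ∧ p.2 = q.2 + 1 then 1 else 0
  have Msymm : ∀ p q, M p q = M q p := by
    intro p q
    have hiff : (p.1 = q.1 ∧ p.2 = q.2 + 1) ↔ (q.1 = p.1 ∧ q.2 = p.2 + 1) := by
      constructor
      · rintro ⟨h1, h2⟩; exact ⟨h1.symm, e6 _ _ h2⟩
      · rintro ⟨h1, h2⟩; exact ⟨h1.symm, e6 _ _ h2⟩
    simp only [M, hiff]
  have Mdiag : ∀ p, M p p = 0 := by
    intro p
    simp only [M, ite_eq_right_iff]
    rintro ⟨-, h2⟩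
    exact absurd h2 (e2 p.2)
  have Mcross : ∀ p q, p.1 ≠ q.1 → M p q = 0 := by
    intro p q hpq
    simp only [M, ite_eq_right_iff]
    rintro ⟨h1, -⟩
    exact absurd h1 hpq
  -- the form
  let f : (Fin (2 * h) → F2) →ₗ[F2] (Fin (2 * h) → F2) →ₗ[F2] F2 :=
    B.constr F2 fun p => B.constr F2 fun q => M p q
  have fBB : ∀ p q, f (B p) (B q) = M p q := by
    intro p q
    simp only [f, Module.Basis.constr_basis]
  have frepr : ∀ w q, f w (B q) = B.repr w (q.1, q.2 + 1) := by
    intro w q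
    conv_lhs => rw [← B.sum_repr w]
    rw [map_sum, LinearMap.sum_apply]
    have hterm : ∀ p, f ((B.repr w p) • B p) (B q)
        = if p = (q.1, q.2 + 1) then B.repr w p else 0 := by
      intro p
      rw [map_smul, LinearMap.smul_apply, fBB, smul_eq_mul]
      by_cases hc : p = (q.1, q.2 + 1)
      · subst hc; simp [M]
      · have hM : M p q = 0 := by
          simp only [M, ite_eq_right_iff]
          rintro ⟨h1, h2⟩
          exact absurd (pext p (q.1, q.2 + 1) h1 h2) hc
        simp [hM, hc]
    simp_rw [hterm]
    rw [Finset.sum_ite_eq' Finset.univ]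
    simp
  have fsymm : ∀ x y, f x y = f y x := by
    have hf : f = f.flip := by
      apply B.ext; intro p
      apply B.ext; intro q
      rw [LinearMap.flip_apply, fBB, fBB, Msymm]
    intro x y
    conv_lhs => rw [hf]
    rfl
  have falt : ∀ x, f x x = 0 := by
    intro x
    have hx : x ∈ Submodule.span F2 (Set.range B) := by rw [B.span_eq]; trivial
    induction hx using Submodule.span_induction with
    | mem y hy => rcases hy with ⟨p, rfl⟩; rw [fBB, Mdiag]
    | zero => simp
    | add y z hy hz hfy hfz =>
        rw [map_add f y z, LinearMap.add_apply, map_add, map_add, hfy, hfz, zero_add, add_zero,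
          fsymm z y]
        exact hF2 _
    | smul c y hy hfy => simp [hfy]
  have fnd : ∀ x, (∀ w, f x w = 0) → x = 0 := by
    intro x hx
    have h0 : B.repr x = 0 := by
      ext p
      have hp := frepr x (p.1, p.2 + 1)
      rw [hx] at hp
      rw [e4 p.2] at hp
      simpa using hp.symm
    exact B.repr.map_eq_zero_iff.mp h0
  -- the perpendicularity property
  have hperpf : ∀ i, sperp f (ℓ i) = ⨆ j ∈ ({j | j ≠ i} : Set (Fin h)), ℓ j := by
    intro i
    apply le_antisymm
    · intro x hx
      have hx' : ∀ w ∈ ℓ i, f x w = 0 := hx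
      rw [← B.sum_repr x]
      apply Submodule.sum_mem
      rintro ⟨pi, pk⟩ -
      by_cases hp : pi = i
      · have h0 : B.repr x (pi, pk) = 0 := by
          have hp2 := frepr x (pi, pk + 1)
          rw [hx' _ (by rw [← hp]; exact hBmem (pi, pk + 1))] at hp2
          rw [e4 pk] at hp2
          exact hp2.symm
        rw [h0, zero_smul]
        exact Submodule.zero_mem _
      · exact Submodule.smul_mem _ _
          (Submodule.mem_iSup_of_mem pi (Submodule.mem_iSup_of_mem hp (hBmem (pi, pk))))
    · refine iSup₂_le fun j hj => ?_
      intro x hx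
      rw [mem_sperp]
      have step1 : ∀ l : Fin 2, f x (B (i, l)) = 0 := by
        intro l
        have hker : ℓ j ≤ LinearMap.ker (f.flip (B (i, l))) := by
          rw [← hsp j, Submodule.span_le]
          rintro - ⟨k, rfl⟩
          simp only [SetLike.mem_coe, LinearMap.mem_ker, LinearMap.flip_apply]
          rw [← hB (j, k), fBB]
          exact Mcross (j, k) (i, l) hj
        have := hker hx
        simpa [LinearMap.mem_ker, LinearMap.flip_apply] using this
      have step2 : ℓ i ≤ LinearMap.ker (f x) := by
        rw [← hsp i, Submodule.span_le]
        rintro - ⟨l, rfl⟩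
        simp only [SetLike.mem_coe, LinearMap.mem_ker]
        rw [← hB (i, l)]
        exact step1 l
      intro w hw
      exact LinearMap.mem_ker.mp (step2 hw)
  refine ⟨f, ⟨⟨falt, fnd⟩, hperpf⟩, ?_⟩
  rintro g ⟨⟨galt, gnd⟩, gperp⟩
  have gsymm : ∀ x y, g x y = g y x := by
    intro x y
    have h0 := galt (x + y)
    rw [map_add g x y, LinearMap.add_apply, map_add, map_add, galt x, galt y, zero_add, add_zero] at h0
    exact hFadd _ _ h0
  have gcross : ∀ p q : Fin h × Fin 2, p.1 ≠ q.1 → g (B p) (B q) = 0 := by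
    intro p q hpq
    have h1 : B p ∈ sperp g (ℓ q.1) := by
      rw [gperp q.1]
      exact Submodule.mem_iSup_of_mem p.1 (Submodule.mem_iSup_of_mem hpq (hBmem p))
    exact (mem_sperp g (ℓ q.1) (B p)).mp h1 (B q) (hBmem q)
  have gdiag1 : ∀ p q : Fin h × Fin 2, p.1 = q.1 → p.2 ≠ q.2 → g (B p) (B q) = 1 := by
    intro p q h1 h2
    rcases hF (g (B p) (B q)) with h0 | h0
    · exfalso
      have hz : ∀ r, g (B p) (B r) = 0 := by
        intro r
        by_cases hr1 : r.1 = p.1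
        · by_cases hr2 : r.2 = p.2
          · rw [pext r p hr1 hr2]
            exact galt _
          · rw [pext r q (hr1.trans h1) (efin2 r.2 p.2 q.2 hr2 (Ne.symm h2))]
            exact h0
        · rw [gsymm]
          exact gcross r p hr1
      have hp0 : B p = 0 := by
        apply gnd
        intro w
        have hw : w ∈ Submodule.span F2 (Set.range B) := by rw [B.span_eq]; trivial
        have hker : Submodule.span F2 (Set.range B) ≤ LinearMap.ker (g (B p)) := by
          rw [Submodule.span_le]
          rintro - ⟨r, rfl⟩
          simpa [LinearMap.mem_ker] using hz r
        exact LinearMap.mem_ker.mp (hker hw)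
      exact B.ne_zero p hp0
    · exact h0
  apply B.ext; intro p
  apply B.ext; intro q
  rw [fBB]
  by_cases h1 : p.1 = q.1
  · by_cases h2 : p.2 = q.2
    · rw [pext p q h1 h2, Mdiag]
      exact galt _
    · have hM : M p q = 1 := by
        simp [M, h1, e3 p.2 q.2 h2]
      rw [hM]
      exact gdiag1 p q h1 h2
  · rw [Mcross p q h1]
    exact gcross p q h1
end

section
/- If an [[n,k,d]]_q stabiliser code satisfies k = n - 2d + 2 (meets the quantum Singleton bound with equality), then the minimum nonzero symplectic weight of the associated self-orthogonal code C = τ(S) is n - d + 2; in particular the code is pure. -/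
attribute [local instance] Classical.propDecidable

/-- The symplectic weight of `(a|b)`: the number of positions `i` with
`(aᵢ, bᵢ) ≠ (0,0)`. -/
noncomputable def swt (h n : ℕ)
    (v : (Fin n → GaloisField 2 h) × (Fin n → GaloisField 2 h)) : ℕ :=
  (Finset.univ.filter fun i => ¬(v.1 i = 0 ∧ v.2 i = 0)).card

/-- The trace-symplectic dual of an additive code `C`. -/
noncomputable def trDual (h n : ℕ)
    (C : Submodule (ZMod 2) ((Fin n → GaloisField 2 h) × (Fin n → GaloisField 2 h))) :
    Set ((Fin n → GaloisField 2 h) × (Fin n → GaloisField 2 h)) :=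
  {v | ∀ w ∈ C, trSymp h n v w = 0}


set_option maxHeartbeats 1000000

namespace Stmt16
variable {h n : ℕ}

local notation "F" => GaloisField 2 h
local notation "VV" => (Fin n → GaloisField 2 h) × (Fin n → GaloisField 2 h)

lemma trF_add (x y : F) : trF h (x + y) = trF h x + trF h y := map_add _ _ _
lemma trF_smul (c : ZMod 2) (x : F) : trF h (c • x) = c • trF h x := map_smul _ _ _

/-- `trSymp` as a bilinear form. -/
noncomputable def Bf (h n : ℕ) :
    LinearMap.BilinForm (ZMod 2) ((Fin n → GaloisField 2 h) × (Fin n → GaloisField 2 h)) :=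
  LinearMap.mk₂ (ZMod 2) (trSymp h n)
    (fun v v' w => by
      simp only [trSymp, ← Finset.sum_add_distrib, Prod.fst_add, Prod.snd_add, Pi.add_apply]
      refine Finset.sum_congr rfl fun i _ => ?_
      rw [← trF_add]; ring_nf)
    (fun c v w => by
      simp only [trSymp, Finset.smul_sum, Prod.smul_fst, Prod.smul_snd, Pi.smul_apply]
      refine Finset.sum_congr rfl fun i _ => ?_
      rw [smul_mul_assoc, mul_smul_comm, ← smul_add, trF_smul])
    (fun v w w' => by
      simp only [trSymp, ← Finset.sum_add_distrib, Prod.fst_add, Prod.snd_add, Pi.add_apply]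
      refine Finset.sum_congr rfl fun i _ => ?_
      rw [← trF_add]; ring_nf)
    (fun c v w => by
      simp only [trSymp, Finset.smul_sum, Prod.smul_fst, Prod.smul_snd, Pi.smul_apply]
      refine Finset.sum_congr rfl fun i _ => ?_
      rw [mul_smul_comm, smul_mul_assoc, ← smul_add, trF_smul])

lemma Bf_apply (v w : VV) : Bf h n v w = trSymp h n v w := rfl

lemma trSymp_comm (v w : VV) : trSymp h n v w = trSymp h n w v := by
  unfold trSymp; refine Finset.sum_congr rfl fun i _ => ?_; rw [add_comm]

lemma Bf_symm (v w : VV) : Bf h n v w = Bf h n w v := trSymp_comm v w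

lemma Bf_refl : (Bf h n).IsRefl := fun v w hv => by rwa [Bf_symm]

lemma exists_trF_ne_zero (hh : h ≠ 0) : ∃ z : F, trF h z ≠ 0 := by
  have h1 : Algebra.trace (ZMod 2) F ≠ 0 := Algebra.trace_ne_zero (ZMod 2) F
  by_contra hc
  push_neg at hc
  exact h1 (LinearMap.ext fun x => by simpa [trF] using hc x)

lemma exists_pair_trF (hh : h ≠ 0) {a : F} (ha : a ≠ 0) : ∃ b : F, trF h (a * b) ≠ 0 := by
  obtain ⟨z, hz⟩ := exists_trF_ne_zero hh
  exact ⟨a⁻¹ * z, by rwa [← mul_assoc, mul_inv_cancel₀ ha, one_mul]⟩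

end Stmt16
section ChunkB
namespace Stmt16
variable {h n : ℕ}
local notation "F" => GaloisField 2 h
local notation "VV" => (Fin n → GaloisField 2 h) × (Fin n → GaloisField 2 h)

noncomputable def sing1 (i : Fin n) (c : F) : VV := (Pi.single i c, 0)
noncomputable def sing2 (i : Fin n) (c : F) : VV := (0, Pi.single i c)

lemma trSymp_sing2 (v : VV) (i : Fin n) (c : F) :
    trSymp h n v (sing2 i c) = trF h (v.1 i * c) := by
  unfold trSymp sing2
  rw [Finset.sum_eq_single i]
  · simp
  · intro j _ hj; simp [Pi.single_eq_of_ne hj, trF]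
  · simp

lemma trSymp_sing1 (v : VV) (i : Fin n) (c : F) :
    trSymp h n v (sing1 i c) = trF h (c * v.2 i) := by
  unfold trSymp sing1
  rw [Finset.sum_eq_single i]
  · simp
  · intro j _ hj; simp [Pi.single_eq_of_ne hj, trF]
  · simp

lemma Bf_nondeg (hh : h ≠ 0) : (Bf h n).Nondegenerate := by
  have hL : ∀ v : VV, (∀ w, Bf h n v w = 0) → v = 0 := by
   intro v hv
   by_contra hv0
   have hex : ∃ i : Fin n, v.1 i ≠ 0 ∨ v.2 i ≠ 0 := by
    by_contra hall; push_neg at hall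
    exact hv0 (Prod.ext (funext fun i => (hall i).1) (funext fun i => (hall i).2))
   obtain ⟨i, hi⟩ := hex
   rcases hi with h1 | h2
   · obtain ⟨b, hb⟩ := exists_pair_trF hh h1
     exact hb (by rw [← trSymp_sing2 v i b]; exact hv (sing2 i b))
   · obtain ⟨b, hb⟩ := exists_pair_trF hh h2
     refine hb ?_
     have := hv (sing1 i b)
     rw [Bf_apply, trSymp_sing1] at this
     rwa [mul_comm]
  exact ⟨hL, fun w hw => hL w fun v => by rw [Bf_symm]; exact hw v⟩

/-- The submodule of vectors supported (symplectically) inside `B`. -/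
noncomputable def VB (h n : ℕ) (B : Finset (Fin n)) :
    Submodule (ZMod 2) ((Fin n → GaloisField 2 h) × (Fin n → GaloisField 2 h)) where
  carrier := {v | ∀ i ∉ B, v.1 i = 0 ∧ v.2 i = 0}
  add_mem' := by
    intro a b ha hb i hi
    exact ⟨by rw [Prod.fst_add, Pi.add_apply, (ha i hi).1, (hb i hi).1, add_zero],
           by rw [Prod.snd_add, Pi.add_apply, (ha i hi).2, (hb i hi).2, add_zero]⟩
  zero_mem' := fun i _ => ⟨rfl, rfl⟩
  smul_mem' := by
    intro c x hx i hi
    exact ⟨by rw [Prod.smul_fst, Pi.smul_apply, (hx i hi).1, smul_zero],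
           by rw [Prod.smul_snd, Pi.smul_apply, (hx i hi).2, smul_zero]⟩

lemma mem_VB_iff {B : Finset (Fin n)} {v : VV} :
    v ∈ VB h n B ↔ ∀ i ∉ B, v.1 i = 0 ∧ v.2 i = 0 := Iff.rfl

noncomputable def suppv (v : VV) : Finset (Fin n) :=
  Finset.univ.filter fun i => ¬(v.1 i = 0 ∧ v.2 i = 0)

lemma swt_eq_card_suppv (v : VV) : swt h n v = (suppv v).card := rfl

lemma mem_VB_iff_supp {B : Finset (Fin n)} {v : VV} :
    v ∈ VB h n B ↔ suppv v ⊆ B := by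
  rw [mem_VB_iff]
  constructor
  · intro hv i hi
    rw [suppv, Finset.mem_filter] at hi
    by_contra hiB
    exact hi.2 (hv i hiB)
  · intro hs i hi
    by_contra hc
    exact hi (hs (by rw [suppv, Finset.mem_filter]; exact ⟨Finset.mem_univ i, hc⟩))

lemma finrank_F (hh : h ≠ 0) : Module.finrank (ZMod 2) F = h := by
  have h1 := GaloisField.card 2 h hh
  have h2 : Nat.card F = Nat.card (ZMod 2) ^ Module.finrank (ZMod 2) F := by
    rw [Nat.card_eq_fintype_card, Nat.card_eq_fintype_card,
      Module.card_eq_pow_finrank (K := ZMod 2) (V := F)]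
  rw [h1, Nat.card_eq_fintype_card, ZMod.card] at h2
  exact (Nat.pow_right_injective (le_refl 2) h2).symm

lemma finrank_V (hh : h ≠ 0) :
    Module.finrank (ZMod 2) ((Fin n → GaloisField 2 h) × (Fin n → GaloisField 2 h))
      = 2 * (n * h) := by
  rw [Module.finrank_prod, Module.finrank_pi_fintype, finrank_F hh]
  simp [Finset.sum_const, two_mul]

lemma card_submodule (W : Submodule (ZMod 2) VV) :
    Nat.card W = 2 ^ Module.finrank (ZMod 2) W := by
  rw [Nat.card_eq_fintype_card, Module.card_eq_pow_finrank (K := ZMod 2) (V := W), ZMod.card]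

end Stmt16
end ChunkB
namespace Stmt16
variable {h n : ℕ}
local notation "F" => GaloisField 2 h
local notation "VV" => (Fin n → GaloisField 2 h) × (Fin n → GaloisField 2 h)

/-- Linear equivalence between `VB B` and pairs of functions on `B`. -/
noncomputable def eVB (B : Finset (Fin n)) :
    (VB h n B) ≃ₗ[ZMod 2] (({ i // i ∈ B } → F) × ({ i // i ∈ B } → F)) where
  toFun v := (fun i => (v : VV).1 i, fun i => (v : VV).2 i)
  invFun u := ⟨(fun i => if hi : i ∈ B then u.1 ⟨i, hi⟩ else 0,
                fun i => if hi : i ∈ B then u.2 ⟨i, hi⟩ else 0),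
    fun i hi => by simp [hi]⟩
  left_inv v := by
    apply Subtype.ext
    refine Prod.ext (funext fun i => ?_) (funext fun i => ?_) <;>
    · by_cases hi : i ∈ B
      · simp [hi]
      · simp [hi, (v.2 i hi).1, (v.2 i hi).2]
  right_inv u := by
    refine Prod.ext (funext fun i => ?_) (funext fun i => ?_) <;> simp
  map_add' v w := rfl
  map_smul' c v := rfl

lemma finrank_VB (hh : h ≠ 0) (B : Finset (Fin n)) :
    Module.finrank (ZMod 2) (VB h n B) = 2 * (B.card * h) := by
  rw [LinearEquiv.finrank_eq (eVB B), Module.finrank_prod, Module.finrank_pi_fintype,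
    finrank_F hh]
  simp [Finset.sum_const, Fintype.card_coe, two_mul]

/-- Orthogonal complement w.r.t. `Bf`. -/
noncomputable def O (h n : ℕ)
    (W : Submodule (ZMod 2) ((Fin n → GaloisField 2 h) × (Fin n → GaloisField 2 h))) :
    Submodule (ZMod 2) ((Fin n → GaloisField 2 h) × (Fin n → GaloisField 2 h)) :=
  (Bf h n).orthogonal W

lemma mem_O_iff {W : Submodule (ZMod 2) VV} {v : VV} :
    v ∈ O h n W ↔ ∀ w ∈ W, trSymp h n v w = 0 := by
  constructor
  · intro hv w hw
    rw [trSymp_comm]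
    exact hv w hw
  · intro hv w hw
    have := hv w hw
    rw [trSymp_comm] at this
    exact this

lemma trDual_eq (C : Submodule (ZMod 2) VV) : trDual h n C = ↑(O h n C) := by
  ext v
  rw [SetLike.mem_coe, mem_O_iff]
  exact Iff.rfl

lemma finrank_O (hh : h ≠ 0) (W : Submodule (ZMod 2) VV) :
    Module.finrank (ZMod 2) (O h n W) =
      Module.finrank (ZMod 2) VV - Module.finrank (ZMod 2) W :=
  LinearMap.BilinForm.finrank_orthogonal (Bf_nondeg hh) W

lemma O_O (hh : h ≠ 0) (W : Submodule (ZMod 2) VV) : O h n (O h n W) = W :=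
  LinearMap.BilinForm.orthogonal_orthogonal (Bf_nondeg hh) Bf_refl W

lemma O_VB (hh : h ≠ 0) (B : Finset (Fin n)) : O h n (VB h n B) = VB h n Bᶜ := by
  apply le_antisymm
  · intro v hv
    rw [mem_O_iff] at hv
    rw [mem_VB_iff]
    intro i hi
    rw [Finset.mem_compl, not_not] at hi
    constructor
    · by_contra h1
      obtain ⟨b, hb⟩ := exists_pair_trF hh h1
      have hw : sing2 i b ∈ VB h n B := by
        rw [mem_VB_iff]
        intro j hj
        have hji : j ≠ i := fun e => hj (e ▸ hi)
        unfold sing2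
        simp [Pi.single_eq_of_ne hji]
      exact hb (by rw [← trSymp_sing2 v i b]; exact hv _ hw)
    · by_contra h2
      obtain ⟨b, hb⟩ := exists_pair_trF hh h2
      have hw : sing1 i b ∈ VB h n B := by
        rw [mem_VB_iff]
        intro j hj
        have hji : j ≠ i := fun e => hj (e ▸ hi)
        unfold sing1
        simp [Pi.single_eq_of_ne hji]
      have := hv _ hw
      rw [trSymp_sing1] at this
      rw [mul_comm] at this
      exact hb this
  · intro v hv
    rw [mem_VB_iff] at hv
    rw [mem_O_iff]
    intro w hw
    rw [mem_VB_iff] at hw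
    unfold trSymp
    refine Finset.sum_eq_zero fun i _ => ?_
    by_cases hi : i ∈ B
    · have := hv i (by simpa using hi)
      rw [this.1, this.2, zero_mul, mul_zero, add_zero, trF]; exact map_zero _
    · have := hw i hi
      rw [this.1, this.2, zero_mul, mul_zero, zero_add, trF]; exact map_zero _

lemma O_sup (W₁ W₂ : Submodule (ZMod 2) VV) : O h n (W₁ ⊔ W₂) = O h n W₁ ⊓ O h n W₂ := by
  apply le_antisymm
  · exact le_inf ((Bf h n).orthogonal_le le_sup_left) ((Bf h n).orthogonal_le le_sup_right)
  · intro v hv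
    rw [mem_O_iff]
    intro w hw
    obtain ⟨x, hx, y, hy, rfl⟩ := Submodule.mem_sup.mp hw
    have h1 := mem_O_iff.mp hv.1 x hx
    have h2 := mem_O_iff.mp hv.2 y hy
    have hadd : trSymp h n v (x + y) = trSymp h n v x + trSymp h n v y := map_add (Bf h n v) x y
    rw [hadd, h1, h2, add_zero]

end Stmt16
namespace Stmt16

lemma choose_succ_strict {N r : ℕ} (hr : 2 * (r + 1) ≤ N) :
    N.choose r < N.choose (r + 1) := by
  have hrN : r ≤ N := by omega
  have hpos : 0 < N.choose r := Nat.choose_pos hrN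
  have heq := Nat.choose_succ_right_eq N r
  have h1 : N.choose r * (r + 1) < N.choose r * (N - r) :=
    (Nat.mul_lt_mul_left hpos).mpr (by omega)
  rw [← heq] at h1
  exact Nat.lt_of_mul_lt_mul_right h1

lemma choose_mono_middle {N : ℕ} : ∀ {a b : ℕ}, a ≤ b → 2 * b ≤ N →
    N.choose a ≤ N.choose b := by
  intro a b
  induction b with
  | zero =>
    intro hab _
    have : a = 0 := by omega
    rw [this]
  | succ m ih =>
    intro hab h2b
    rcases Nat.lt_or_ge a (m + 1) with hlt | hge
    · exact le_trans (ih (by omega) (by omega)) (le_of_lt (choose_succ_strict h2b))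
    · have : a = m + 1 := by omega
      rw [this]

lemma choose_strict_middle {N j j' : ℕ} (hjj : j < j') (hsum : j + j' < N) :
    N.choose j < N.choose j' := by
  have hj'N : j' ≤ N := by omega
  set j'' := min j' (N - j') with hj''
  have hch : N.choose j'' = N.choose j' := by
    rcases min_choice j' (N - j') with hc | hc
    · rw [hj'', hc]
    · rw [hj'', hc, Nat.choose_symm hj'N]
  have hjj'' : j < j'' := lt_min hjj (by omega)
  have h2 : 2 * j'' ≤ N := by
    have h1 := min_le_left j' (N - j')
    have h2 := min_le_right j' (N - j')
    omega
  calc N.choose j < N.choose (j + 1) := choose_succ_strict (by omega)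
    _ ≤ N.choose j'' := choose_mono_middle (by omega) h2
    _ = N.choose j' := hch

end Stmt16
namespace Stmt16

lemma card_supersets {n : ℕ} (A : Finset (Fin n)) (t : ℕ) (hA : A.card ≤ t) :
    ((Finset.powersetCard t (Finset.univ : Finset (Fin n))).filter fun X => A ⊆ X).card
      = (n - A.card).choose (t - A.card) := by
  have hc : Aᶜ.card = n - A.card := by
    rw [Finset.card_compl, Fintype.card_fin]
  rw [← hc, ← Finset.card_powersetCard (t - A.card) Aᶜ]
  apply Finset.card_nbij' (fun X => X \ A) (fun Y => Y ∪ A)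
  · intro X hX
    rw [Finset.mem_coe, Finset.mem_filter, Finset.mem_powersetCard_univ] at hX
    rw [Finset.mem_coe, Finset.mem_powersetCard]
    constructor
    · intro x hx
      rw [Finset.mem_compl]
      exact (Finset.mem_sdiff.mp hx).2
    · rw [Finset.card_sdiff_of_subset hX.2, hX.1]
  · intro Y hY
    rw [Finset.mem_coe, Finset.mem_powersetCard] at hY
    rw [Finset.mem_coe, Finset.mem_filter, Finset.mem_powersetCard_univ]
    have hdisj : Disjoint Y A := Finset.disjoint_left.mpr
      (fun {x} hx hxA => (Finset.mem_compl.mp (hY.1 hx)) hxA)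
    refine ⟨?_, Finset.subset_union_right⟩
    rw [Finset.card_union_of_disjoint hdisj, hY.2]
    omega
  · intro X hX
    rw [Finset.mem_coe, Finset.mem_filter] at hX
    exact Finset.sdiff_union_of_subset hX.2
  · intro Y hY
    rw [Finset.mem_coe, Finset.mem_powersetCard] at hY
    ext x
    simp only [Finset.mem_sdiff, Finset.mem_union]
    constructor
    · rintro ⟨hx | hx, hxA⟩
      · exact hx
      · exact absurd hx hxA
    · intro hx
      exact ⟨Or.inl hx, fun hxA => (Finset.mem_compl.mp (hY.1 hx)) hxA⟩

lemma card_supersets_zero {n : ℕ} (A : Finset (Fin n)) (t : ℕ) (hA : t < A.card) :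
    ((Finset.powersetCard t (Finset.univ : Finset (Fin n))).filter fun X => A ⊆ X).card = 0 := by
  rw [Finset.card_eq_zero, Finset.filter_eq_empty_iff]
  intro X hX hAX
  rw [Finset.mem_powersetCard_univ] at hX
  have := Finset.card_le_card hAX
  omega

end Stmt16
namespace Stmt16
variable {h n k d : ℕ}
local notation "F" => GaloisField 2 h
local notation "VV" => (Fin n → GaloisField 2 h) × (Fin n → GaloisField 2 h)

lemma finrank_O_add (hh : h ≠ 0) (W : Submodule (ZMod 2) VV) :
    Module.finrank (ZMod 2) W + Module.finrank (ZMod 2) (O h n W)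
      = Module.finrank (ZMod 2) VV := by
  have := LinearMap.BilinForm.finrank_add_finrank_orthogonal (B := Bf h n) Bf_refl W
  rwa [LinearMap.BilinForm.orthogonal_top_eq_bot (Bf_nondeg hh), inf_bot_eq,
    finrank_bot, add_zero] at this

lemma finrank_C (hh : h ≠ 0) (C : Submodule (ZMod 2) VV)
    (hcard : Nat.card C = (2 ^ h) ^ (n - k)) :
    Module.finrank (ZMod 2) C = h * (n - k) := by
  have h1 := card_submodule (h := h) (n := n) C
  rw [hcard, ← pow_mul] at h1
  exact (Nat.pow_right_injective (le_refl 2) h1).symm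

lemma card_inter_eq_filter (C : Submodule (ZMod 2) VV) (B : Finset (Fin n)) :
    Nat.card (C ⊓ VB h n B : Submodule (ZMod 2) VV) =
      (Finset.univ.filter fun v : VV => v ∈ C ∧ suppv v ⊆ B).card := by
  rw [Nat.card_eq_fintype_card, ← Fintype.card_subtype]
  apply Fintype.card_congr
  apply Equiv.subtypeEquivRight
  intro v
  rw [Submodule.mem_inf, mem_VB_iff_supp]

lemma rank_rel (hh : h ≠ 0) (hd : 2 ≤ d) (hk0 : k ≠ 0) (hk : k ≤ n)
    (hSing : n + 2 = k + 2 * d)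
    (C : Submodule (ZMod 2) VV)
    (hself : ∀ v ∈ C, ∀ w ∈ C, trSymp h n v w = 0)
    (hcard : Nat.card C = (2 ^ h) ^ (n - k))
    (hdistLB : ∀ v ∈ trDual h n C, v ∉ C → d ≤ swt h n v)
    (B : Finset (Fin n)) (hB : B.card = n - d + 1) :
    Module.finrank (ZMod 2) (C ⊓ VB h n B : Submodule (ZMod 2) VV)
      = Module.finrank (ZMod 2) (C ⊓ VB h n Bᶜ : Submodule (ZMod 2) VV) := by
  have hCD : C ≤ O h n C := fun v hv => mem_O_iff.mpr (fun w hw => hself v hv w hw)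
  have hBc : Bᶜ.card = d - 1 := by
    rw [Finset.card_compl, Fintype.card_fin, hB]; omega
  -- step a
  have hDB : (O h n C) ⊓ VB h n Bᶜ = C ⊓ VB h n Bᶜ := by
    apply le_antisymm
    · intro w hw
      rcases hw with ⟨hw1, hw2⟩
      have hsupp : suppv w ⊆ Bᶜ := mem_VB_iff_supp.mp hw2
      have hwt : swt h n w ≤ d - 1 := by
        rw [swt_eq_card_suppv]
        calc (suppv w).card ≤ Bᶜ.card := Finset.card_le_card hsupp
          _ = d - 1 := hBc
      by_cases hwc : w ∈ C
      · exact ⟨hwc, hw2⟩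
      · have hd' := hdistLB w (by rw [trDual_eq]; exact hw1) hwc
        omega
    · exact inf_le_inf_right _ hCD
  have hOsup : O h n ((O h n C) ⊔ VB h n Bᶜ) = C ⊓ VB h n B := by
    rw [O_sup, O_O hh, O_VB hh, compl_compl]
  -- rank equations
  have A1 := finrank_O_add hh ((O h n C) ⊔ VB h n Bᶜ)
  rw [hOsup] at A1
  have A2 := Submodule.finrank_sup_add_finrank_inf_eq (O h n C) (VB h n Bᶜ)
  rw [hDB] at A2
  have A3 := finrank_O_add hh C
  have hnk : n - k = 2 * (d - 1) := by omega
  have hCX : Module.finrank (ZMod 2) C = Module.finrank (ZMod 2) (VB h n Bᶜ) := by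
    rw [finrank_C hh C hcard, finrank_VB hh, hBc, hnk]; ring
  omega

lemma card_rel (hh : h ≠ 0) (hd : 2 ≤ d) (hk0 : k ≠ 0) (hk : k ≤ n)
    (hSing : n + 2 = k + 2 * d)
    (C : Submodule (ZMod 2) VV)
    (hself : ∀ v ∈ C, ∀ w ∈ C, trSymp h n v w = 0)
    (hcard : Nat.card C = (2 ^ h) ^ (n - k))
    (hdistLB : ∀ v ∈ trDual h n C, v ∉ C → d ≤ swt h n v)
    (B : Finset (Fin n)) (hB : B.card = n - d + 1) :
    (Finset.univ.filter fun v : VV => v ∈ C ∧ suppv v ⊆ B).card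
      = (Finset.univ.filter fun v : VV => v ∈ C ∧ suppv v ⊆ Bᶜ).card := by
  rw [← card_inter_eq_filter, ← card_inter_eq_filter, card_submodule, card_submodule,
    rank_rel hh hd hk0 hk hSing C hself hcard hdistLB B hB]

lemma suppv_eq_empty_iff (v : VV) : suppv v = ∅ ↔ v = 0 := by
  constructor
  · intro hv
    have : ∀ i, v.1 i = 0 ∧ v.2 i = 0 := by
      intro i
      by_contra hc
      have : i ∈ suppv v := by
        rw [suppv, Finset.mem_filter]; exact ⟨Finset.mem_univ i, hc⟩
      rw [hv] at this
      exact absurd this (Finset.notMem_empty i)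
    exact Prod.ext (funext fun i => (this i).1) (funext fun i => (this i).2)
  · intro hv
    rw [hv, suppv]
    apply Finset.filter_eq_empty_iff.mpr
    intro i _
    simp

end Stmt16
namespace Stmt16
variable {h n k d : ℕ}
local notation "F" => GaloisField 2 h
local notation "VV" => (Fin n → GaloisField 2 h) × (Fin n → GaloisField 2 h)

/-- Number of `t`-subsets of `Fin n` containing `A`. -/
noncomputable def cntSup {n : ℕ} (t : ℕ) (A : Finset (Fin n)) : ℕ :=
  ((Finset.powersetCard t (Finset.univ : Finset (Fin n))).filter fun B => A ⊆ B).card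

lemma sum_count (C : Submodule (ZMod 2) VV) (t : ℕ) :
    ∑ B ∈ Finset.powersetCard t (Finset.univ : Finset (Fin n)),
      (Finset.univ.filter fun v : VV => v ∈ C ∧ suppv v ⊆ B).card
    = ∑ v ∈ Finset.univ.filter (fun v : VV => v ∈ C), cntSup t (suppv v) := by
  have e1 : ∀ X : Finset (Fin n),
      (Finset.univ.filter fun v : VV => v ∈ C ∧ suppv v ⊆ X).card
        = ∑ v ∈ Finset.univ.filter (fun v : VV => v ∈ C),
            if suppv v ⊆ X then 1 else 0 := by
    intro X
    rw [← Finset.filter_filter, Finset.card_filter]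
  calc ∑ B ∈ Finset.powersetCard t (Finset.univ : Finset (Fin n)),
        (Finset.univ.filter fun v : VV => v ∈ C ∧ suppv v ⊆ B).card
      = ∑ B ∈ Finset.powersetCard t (Finset.univ : Finset (Fin n)),
          ∑ v ∈ Finset.univ.filter (fun v : VV => v ∈ C),
            if suppv v ⊆ B then 1 else 0 := Finset.sum_congr rfl fun B _ => e1 B
    _ = ∑ v ∈ Finset.univ.filter (fun v : VV => v ∈ C),
          ∑ B ∈ Finset.powersetCard t (Finset.univ : Finset (Fin n)),
            if suppv v ⊆ B then 1 else 0 := Finset.sum_comm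
    _ = ∑ v ∈ Finset.univ.filter (fun v : VV => v ∈ C), cntSup t (suppv v) :=
        Finset.sum_congr rfl fun v _ => (Finset.card_filter _ _).symm

lemma cntSup_le {n d t : ℕ} (A : Finset (Fin n)) (hd : 2 ≤ d) (ht : t = n - d + 1)
    (hdt : d - 1 < t) (htn : t ≤ n) :
    cntSup (d - 1) A ≤ cntSup t A ∧
      (1 ≤ A.card → A.card ≤ t → cntSup (d - 1) A < cntSup t A) := by
  set w := A.card with hw
  by_cases hwt : w ≤ t
  · have hB : cntSup t A = (n - w).choose (t - w) := card_supersets A t hwt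
    by_cases hwd : w ≤ d - 1
    · have hS : cntSup (d - 1) A = (n - w).choose (d - 1 - w) := card_supersets A (d - 1) hwd
      constructor
      · rcases Nat.eq_zero_or_pos w with h0 | h1
        · rw [hS, hB, h0]
          have : (n - 0).choose (t - 0) = n.choose (n - (d-1)) := by
            congr 1 <;> omega
          rw [this, Nat.choose_symm (by omega)]
          simp
        · exact le_of_lt (by
            rw [hS, hB]
            exact choose_strict_middle (by omega) (by omega))
      · intro h1 _
        rw [hS, hB]
        exact choose_strict_middle (by omega) (by omega)
    · have hS : cntSup (d - 1) A = 0 := card_supersets_zero A (d - 1) (by omega)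
      constructor
      · rw [hS]; exact Nat.zero_le _
      · intro _ _
        rw [hS, hB]
        exact Nat.choose_pos (by omega)
  · have hB : cntSup t A = 0 := card_supersets_zero A t (by omega)
    have hS : cntSup (d - 1) A = 0 := card_supersets_zero A (d - 1) (by omega)
    exact ⟨by rw [hS, hB], fun _ h2 => absurd h2 hwt⟩

lemma no_low_weight (hh : h ≠ 0) (hd : 2 ≤ d) (hk0 : k ≠ 0) (hk : k ≤ n)
    (hSing : n + 2 = k + 2 * d)
    (C : Submodule (ZMod 2) VV)
    (hself : ∀ v ∈ C, ∀ w ∈ C, trSymp h n v w = 0)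
    (hcard : Nat.card C = (2 ^ h) ^ (n - k))
    (hdistLB : ∀ v ∈ trDual h n C, v ∉ C → d ≤ swt h n v) :
    ∀ v ∈ C, v ≠ 0 → n - d + 2 ≤ swt h n v := by
  intro v₀ hv₀C hv₀ne
  by_contra hcon
  push_neg at hcon
  set t := n - d + 1 with ht
  have hdn : d ≤ n := by omega
  have htn : t ≤ n := by omega
  have hdt : d - 1 < t := by omega
  -- the global sum identity
  have key : ∑ v ∈ Finset.univ.filter (fun v : VV => v ∈ C), cntSup t (suppv v)
      = ∑ v ∈ Finset.univ.filter (fun v : VV => v ∈ C), cntSup (d - 1) (suppv v) := by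
    rw [← sum_count, ← sum_count]
    calc ∑ B ∈ Finset.powersetCard t (Finset.univ : Finset (Fin n)),
          (Finset.univ.filter fun v : VV => v ∈ C ∧ suppv v ⊆ B).card
        = ∑ B ∈ Finset.powersetCard t (Finset.univ : Finset (Fin n)),
          (Finset.univ.filter fun v : VV => v ∈ C ∧ suppv v ⊆ Bᶜ).card := by
          refine Finset.sum_congr rfl fun B hB => ?_
          exact card_rel hh hd hk0 hk hSing C hself hcard hdistLB B
            (by rw [← Finset.mem_powersetCard_univ]; exact hB)
      _ = ∑ S ∈ Finset.powersetCard (d - 1) (Finset.univ : Finset (Fin n)),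
          (Finset.univ.filter fun v : VV => v ∈ C ∧ suppv v ⊆ S).card := by
          refine Finset.sum_nbij' (fun B => Bᶜ) (fun S => Sᶜ) ?_ ?_ ?_ ?_ ?_
          · intro B hB
            rw [Finset.mem_powersetCard_univ] at hB ⊢
            rw [Finset.card_compl, Fintype.card_fin]
            omega
          · intro S hS
            rw [Finset.mem_powersetCard_univ] at hS ⊢
            rw [Finset.card_compl, Fintype.card_fin]
            omega
          · intro B _; exact compl_compl B
          · intro S _; exact compl_compl S
          · intro B _; rfl
  -- pointwise comparison
  have hle : ∀ v ∈ Finset.univ.filter (fun v : VV => v ∈ C),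
      cntSup (d - 1) (suppv v) ≤ cntSup t (suppv v) :=
    fun v _ => (cntSup_le (suppv v) hd ht hdt htn).1
  have hstrict : cntSup (d - 1) (suppv v₀) < cntSup t (suppv v₀) := by
    refine (cntSup_le (suppv v₀) hd ht hdt htn).2 ?_ ?_
    · by_contra hz
      push_neg at hz
      have : suppv v₀ = ∅ := Finset.card_eq_zero.mp (by omega)
      exact hv₀ne ((suppv_eq_empty_iff v₀).mp this)
    · have := hcon
      rw [swt_eq_card_suppv] at this
      omega
  have hlt : ∑ v ∈ Finset.univ.filter (fun v : VV => v ∈ C), cntSup (d - 1) (suppv v)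
      < ∑ v ∈ Finset.univ.filter (fun v : VV => v ∈ C), cntSup t (suppv v) :=
    Finset.sum_lt_sum hle ⟨v₀, Finset.mem_filter.mpr ⟨Finset.mem_univ _, hv₀C⟩, hstrict⟩
  omega

end Stmt16
namespace Stmt16
variable {h n k d : ℕ}
local notation "F" => GaloisField 2 h
local notation "VV" => (Fin n → GaloisField 2 h) × (Fin n → GaloisField 2 h)

lemma exists_weight (hh : h ≠ 0) (hd : 2 ≤ d) (hk0 : k ≠ 0) (hk : k ≤ n)
    (hSing : n + 2 = k + 2 * d)
    (C : Submodule (ZMod 2) VV)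
    (hcard : Nat.card C = (2 ^ h) ^ (n - k))
    (hlow : ∀ v ∈ C, v ≠ 0 → n - d + 2 ≤ swt h n v) :
    ∃ v ∈ C, v ≠ 0 ∧ swt h n v = n - d + 2 := by
  obtain ⟨S, hSsub, hScard⟩ := Finset.exists_subset_card_eq
    (s := (Finset.univ : Finset (Fin n))) (n := d - 1)
    (by rw [Finset.card_univ, Fintype.card_fin]; omega)
  have hSne : S.Nonempty := Finset.card_pos.mp (by omega)
  obtain ⟨i₀, hi₀⟩ := hSne
  let φ : C → (VB h n S) := fun v => ⟨((fun i => if i ∈ S then (v : VV).1 i else 0),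
      (fun i => if i ∈ S then (v : VV).2 i else 0)), by
    rw [mem_VB_iff]; intro i hi; simp [hi]⟩
  have hφ1 : ∀ (v : C) (i : Fin n), i ∈ S → ((φ v : VV).1 i = (v : VV).1 i
      ∧ (φ v : VV).2 i = (v : VV).2 i) := by
    intro v i hi
    constructor <;> simp [φ, hi]
  have hinj : Function.Injective φ := by
    intro v v' hvv
    have hdiff : ((v : VV) - (v' : VV)) ∈ C := Submodule.sub_mem C v.2 v'.2
    have hcoords : ∀ i ∈ S, (v : VV).1 i = (v' : VV).1 i ∧ (v : VV).2 i = (v' : VV).2 i := by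
      intro i hi
      have h1 := (hφ1 v i hi).1
      have h2 := (hφ1 v i hi).2
      rw [hvv] at h1 h2
      exact ⟨h1.symm.trans (hφ1 v' i hi).1, h2.symm.trans (hφ1 v' i hi).2⟩
    have hsupp : suppv ((v : VV) - (v' : VV)) ⊆ Sᶜ := by
      intro i hi
      rw [Finset.mem_compl]
      intro hiS
      rw [suppv, Finset.mem_filter] at hi
      apply hi.2
      constructor
      · rw [Prod.fst_sub, Pi.sub_apply, (hcoords i hiS).1, sub_self]
      · rw [Prod.snd_sub, Pi.sub_apply, (hcoords i hiS).2, sub_self]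
    have hwt : swt h n ((v : VV) - (v' : VV)) ≤ n - d + 1 := by
      rw [swt_eq_card_suppv]
      calc (suppv ((v : VV) - (v' : VV))).card ≤ Sᶜ.card := Finset.card_le_card hsupp
        _ = n - (d - 1) := by rw [Finset.card_compl, Fintype.card_fin, hScard]
        _ ≤ n - d + 1 := by omega
    have hzero : (v : VV) - (v' : VV) = 0 := by
      by_contra hne
      have := hlow _ hdiff hne
      omega
    exact Subtype.ext (sub_eq_zero.mp hzero)
  have hcards : Fintype.card C = Fintype.card (VB h n S) := by
    rw [← Nat.card_eq_fintype_card, ← Nat.card_eq_fintype_card, hcard,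
      card_submodule (VB h n S), finrank_VB hh S, hScard, ← pow_mul]
    congr 1
    have : n - k = 2 * (d - 1) := by omega
    rw [this]; ring
  have hbij : Function.Bijective φ :=
    (Fintype.bijective_iff_injective_and_card φ).mpr ⟨hinj, hcards⟩
  have hmem : sing1 i₀ (1 : F) ∈ VB h n S := by
    rw [mem_VB_iff]
    intro i hi
    have hii : i ≠ i₀ := fun e => hi (e ▸ hi₀)
    unfold sing1
    simp [Pi.single_eq_of_ne hii]
  obtain ⟨v, hv⟩ := hbij.2 ⟨sing1 i₀ (1 : F), hmem⟩
  have hv' : (φ v : VV) = sing1 i₀ (1 : F) := by rw [hv]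
  have hv1 : (v : VV).1 i₀ = 1 := by
    have := (hφ1 v i₀ hi₀).1
    rw [hv'] at this
    rw [← this]
    unfold sing1
    simp
  have hvne : (v : VV) ≠ 0 := by
    intro hz
    rw [hz] at hv1
    exact one_ne_zero (α := F) (by simpa using hv1.symm)
  have hsupp : suppv (v : VV) ⊆ Sᶜ ∪ {i₀} := by
    intro i hi
    rw [Finset.mem_union, Finset.mem_compl, Finset.mem_singleton]
    by_cases hiS : i ∈ S
    · right
      by_contra hne
      rw [suppv, Finset.mem_filter] at hi
      apply hi.2
      have h1 := (hφ1 v i hiS).1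
      have h2 := (hφ1 v i hiS).2
      rw [hv'] at h1 h2
      unfold sing1 at h1 h2
      constructor
      · rw [← h1]
        exact Pi.single_eq_of_ne hne 1
      · rw [← h2]
        rfl
    · left; exact hiS
  have hub : swt h n (v : VV) ≤ n - d + 2 := by
    rw [swt_eq_card_suppv]
    calc (suppv (v : VV)).card ≤ (Sᶜ ∪ {i₀}).card := Finset.card_le_card hsupp
      _ ≤ Sᶜ.card + 1 := by
          have := Finset.card_union_le Sᶜ ({i₀} : Finset (Fin n))
          simpa using this
      _ = n - (d - 1) + 1 := by rw [Finset.card_compl, Fintype.card_fin, hScard]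
      _ ≤ n - d + 2 := by omega
  have hlb := hlow (v : VV) v.2 hvne
  exact ⟨(v : VV), v.2, hvne, by omega⟩

end Stmt16

open Stmt16 in
/-- If an `[[n,k,d]]_q` stabiliser code meets the quantum Singleton bound
`k = n - 2d + 2` with equality, then the minimum nonzero symplectic weight of the
associated self-orthogonal code `C = τ(S)` is `n - d + 2`; in particular the code
is pure. -/
theorem stmt_16 (h n k d : ℕ) (hh : 1 ≤ h) (hk : k ≤ n) (hd : 2 ≤ d)
    (C : Submodule (ZMod 2) ((Fin n → GaloisField 2 h) × (Fin n → GaloisField 2 h)))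
    (hself : ∀ v ∈ C, ∀ w ∈ C, trSymp h n v w = 0)
    (hcard : Nat.card C = (2 ^ h) ^ (n - k))
    (hdist0 : k = 0 →
      IsLeast {m | ∃ v ∈ trDual h n C, v ≠ 0 ∧ swt h n v = m} d)
    (hdist1 : k ≠ 0 →
      IsLeast {m | ∃ v ∈ trDual h n C, v ∉ C ∧ swt h n v = m} d)
    (hSingleton : n + 2 = k + 2 * d) :
    IsLeast {m | ∃ v ∈ C, v ≠ 0 ∧ swt h n v = m} (n + 2 - d) ∧
      ∀ v ∈ C, v ≠ 0 → d ≤ swt h n v := by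
  have hh0 : h ≠ 0 := by omega
  by_cases hk0 : k = 0
  · -- degenerate case: C equals its own dual
    have hD := hdist0 hk0
    have hCD : C ≤ O h n C := fun v hv => mem_O_iff.mpr (fun w hw => hself v hv w hw)
    have hrC : Module.finrank (ZMod 2) C = h * (n - k) := finrank_C hh0 C hcard
    have hrD := finrank_O_add hh0 C
    have hrV := finrank_V (n := n) hh0
    have hprod : h * (n - k) = n * h := by rw [hk0, Nat.sub_zero]; ring
    have hCeq : C = O h n C := by
      apply Submodule.eq_of_le_of_finrank_le hCD
      omega
    have hsets : trDual h n C = (C : Set ((Fin n → GaloisField 2 h) × (Fin n → GaloisField 2 h))) := by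
      rw [trDual_eq, ← hCeq]
    have hseteq : {m | ∃ v ∈ trDual h n C, v ≠ 0 ∧ swt h n v = m}
        = {m | ∃ v ∈ C, v ≠ 0 ∧ swt h n v = m} := by
      rw [hsets]
      rfl
    have hd2 : n + 2 - d = d := by omega
    rw [hd2]
    constructor
    · rw [← hseteq]
      exact hD
    · intro v hv hvne
      exact hD.2 ⟨v, by rw [hsets]; exact hv, hvne, rfl⟩
  · -- main case
    have hD := hdist1 hk0
    have hdistLB : ∀ v ∈ trDual h n C, v ∉ C → d ≤ swt h n v :=
      fun v hv hvc => hD.2 ⟨v, hv, hvc, rfl⟩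
    have hlow := no_low_weight hh0 hd hk0 hk hSingleton C hself hcard hdistLB
    have hex := exists_weight hh0 hd hk0 hk hSingleton C hcard hlow
    constructor
    · constructor
      · obtain ⟨v, hvC, hvne, hvw⟩ := hex
        exact ⟨v, hvC, hvne, by omega⟩
      · rintro m ⟨v, hvC, hvne, rfl⟩
        have := hlow v hvC hvne
        omega
    · intro v hv hvne
      have := hlow v hv hvne
      omega
end
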